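/- There exists an entire function S : ℂ → ℂ such that: (i) the zero set of S is exactly {tₙ : n ∈ ℕ}; (ii) every zero of S is simple (i.e., S'(tₙ) ≠ 0 for all n); (iii) conj(S(conj z)) = S(z) for all z ∈ ℂ; and (iv) the series ∑ₙ 1/(|S'(tₙ)|² μₙ) converges. -/

import Mathlib

open Complex Finset Metric

noncomputable section

namespace WAux

lemma hasProd_succ {f : ℕ → ℂ} {a : ℂ} (h : HasProd (fun n => f (n + 1)) a) :
    HasProd f (f 0 * a) := by
  have h1 : HasProd (fun n : ℕ => if n = 0 then (1 : ℂ) else f n) a := by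
    have hinj : Function.Injective (fun n : ℕ => n + 1) := fun a b hab => by simpa using hab
    have hro : ∀ x ∉ Set.range (fun n : ℕ => n + 1),
        (if x = 0 then (1 : ℂ) else f x) = 1 := by
      intro x hx
      have hx0 : x = 0 := by
        by_contra h0
        exact hx ⟨x - 1, by simp; omega⟩
      simp [hx0]
    refine (Function.Injective.hasProd_iff hinj hro).mp ?_
    convert h using 1
    funext n
    simp
  have h2 : HasProd (fun n : ℕ => if n = 0 then f 0 else (1 : ℂ)) (f 0) :=
    hasProd_ite_eq 0 (f 0)
  have h3 := h2.mul h1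
  have he : (fun n : ℕ => (if n = 0 then f 0 else 1) * (if n = 0 then (1 : ℂ) else f n)) = f := by
    funext n; by_cases hn : n = 0 <;> simp [hn]
  rwa [he] at h3

lemma hasProd_prefix {f : ℕ → ℂ} {a : ℂ} :
    ∀ N : ℕ, HasProd (fun n => f (n + N)) a →
      HasProd f ((∏ n ∈ Finset.range N, f n) * a)
  | 0, h => by simpa using h
  | (N + 1), h => by
    have heq : (fun n => f ((n + 1) + N)) = (fun n => f (n + (N + 1))) := by
      funext n; congr 1; omega
    have h' : HasProd (fun n => f ((n + 1) + N)) a := heq ▸ h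
    have h2 := hasProd_succ (f := fun m => f (m + N)) h'
    have h3 := hasProd_prefix N h2
    rw [Finset.prod_range_succ]
    convert h3 using 1
    simp [mul_assoc]

lemma hasProd_cexp {g : ℕ → ℂ} {s : ℂ} (h : HasSum g s) :
    HasProd (fun n => Complex.exp (g n)) (Complex.exp s) := by
  have hT := (Complex.continuous_exp.tendsto s).comp h
  unfold HasProd
  convert hT using 1
  funext u
  simp [Function.comp, Complex.exp_sum]

variable (t : ℕ → ℝ)

lemma logTaylor_comp_diff (m : ℕ) (c : ℂ) :
    Differentiable ℂ (fun z : ℂ => logTaylor m (-(z / c))) := by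
  simp only [logTaylor]
  exact Differentiable.fun_sum (fun j _ => by fun_prop)

/-- The `n`-th Weierstrass factor adapted to the zero `t n`. -/
def fac (n : ℕ) (z : ℂ) : ℂ :=
  if t n = 0 then z
  else (1 - z / (t n : ℂ)) * Complex.exp (-(logTaylor (n + 1) (-(z / (t n : ℂ)))))

/-- Logarithm of the `n`-th factor, valid where `‖z / t n‖ < 1`. -/
def gf (n : ℕ) (z : ℂ) : ℂ :=
  Complex.log (1 - z / (t n : ℂ)) - logTaylor (n + 1) (-(z / (t n : ℂ)))

lemma fac_differentiable (n : ℕ) : Differentiable ℂ (fac t n) := by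
  unfold fac
  split
  · exact differentiable_id
  · exact Differentiable.mul (by fun_prop)
      (Differentiable.cexp (logTaylor_comp_diff (n + 1) _).neg)

lemma fac_eq_zero_iff (n : ℕ) (z : ℂ) : fac t n z = 0 ↔ z = ((t n : ℝ) : ℂ) := by
  unfold fac
  split
  next h => simp [h]
  next h =>
    have hc : ((t n : ℝ) : ℂ) ≠ 0 := by exact_mod_cast h
    rw [mul_eq_zero, or_iff_left (Complex.exp_ne_zero _), sub_eq_zero, eq_comm,
      div_eq_one_iff_eq hc]

lemma fac_eq_exp (n : ℕ) (z : ℂ) (h0 : t n ≠ 0) (h1 : ‖z / ((t n : ℝ) : ℂ)‖ < 1) :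
    fac t n z = Complex.exp (gf t n z) := by
  have hne : (1 : ℂ) - z / (t n : ℂ) ≠ 0 := by
    intro h
    rw [sub_eq_zero] at h
    rw [← h] at h1
    simp at h1
  unfold fac gf
  rw [if_neg h0, sub_eq_add_neg (Complex.log _), Complex.exp_add, Complex.exp_log hne]

lemma norm_gf_le (n : ℕ) (z : ℂ) (h0 : t n ≠ 0) (h : ‖z / ((t n : ℝ) : ℂ)‖ ≤ 1 / 2) :
    ‖gf t n z‖ ≤ (1 / 2 : ℝ) ^ n := by
  set w := z / ((t n : ℝ) : ℂ) with hw
  have h1 : ‖-w‖ < 1 := by rw [norm_neg]; linarith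
  have hb := Complex.norm_log_sub_logTaylor_le n h1
  have hgf : gf t n z = Complex.log (1 + -w) - logTaylor (n + 1) (-w) := by
    unfold gf; rw [← hw, sub_eq_add_neg (1 : ℂ) w]
  rw [hgf]
  have hA : ‖-w‖ ^ (n + 1) ≤ (1 / 2 : ℝ) ^ (n + 1) := by
    rw [norm_neg]; exact pow_le_pow_left₀ (norm_nonneg _) h _
  have hBnn : (0 : ℝ) ≤ (1 - ‖-w‖)⁻¹ := by
    rw [norm_neg]; exact inv_nonneg.mpr (by linarith)
  have hB : (1 - ‖-w‖)⁻¹ ≤ 2 := by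
    rw [norm_neg]
    have h12 : (1 / 2 : ℝ) ≤ 1 - ‖w‖ := by linarith
    calc (1 - ‖w‖)⁻¹ ≤ ((1 : ℝ) / 2)⁻¹ := inv_anti₀ (by norm_num) h12
      _ = 2 := by norm_num
  have hn1 : (1 : ℝ) ≤ (n : ℝ) + 1 := by have : (0:ℝ) ≤ (n:ℝ) := Nat.cast_nonneg n; linarith
  calc ‖Complex.log (1 + -w) - logTaylor (n + 1) (-w)‖
      ≤ ‖-w‖ ^ (n + 1) * (1 - ‖-w‖)⁻¹ / (n + 1) := hb
    _ ≤ (1 / 2 : ℝ) ^ (n + 1) * 2 / 1 := by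
        apply div_le_div₀ (by positivity) ?_ one_pos hn1
        exact mul_le_mul hA hB hBnn (by positivity)
    _ = (1 / 2 : ℝ) ^ n := by rw [pow_succ]; ring

lemma re_pos (n : ℕ) (z : ℂ) (h : ‖z / ((t n : ℝ) : ℂ)‖ ≤ 1 / 2) :
    (1 / 2 : ℝ) ≤ ((1 : ℂ) - z / (t n : ℂ)).re := by
  set w := z / ((t n : ℝ) : ℂ) with hw
  have h2 : |w.re| ≤ ‖w‖ := Complex.abs_re_le_norm w
  rw [Complex.sub_re, Complex.one_re]
  have := abs_le.mp (le_trans h2 h)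
  linarith [this.2]

lemma gf_diff (n : ℕ) (z : ℂ) (h0 : t n ≠ 0) (h : ‖z / ((t n : ℝ) : ℂ)‖ ≤ 1 / 2) :
    DifferentiableAt ℂ (gf t n) z := by
  have hslit : (1 : ℂ) - z / (t n : ℂ) ∈ slitPlane := by
    rw [mem_slitPlane_iff]
    left
    have := re_pos t n z h
    linarith
  refine DifferentiableAt.sub ?_ ((logTaylor_comp_diff (n + 1) _) z)
  exact DifferentiableAt.comp z (Complex.differentiableAt_log hslit) (by fun_prop)

lemma conj_logTaylor (m : ℕ) (w : ℂ) :
    (starRingEnd ℂ) (logTaylor m ((starRingEnd ℂ) w)) = logTaylor m w := by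
  simp only [logTaylor, map_sum, map_div₀, map_mul, map_pow, map_neg, map_one,
    Complex.conj_conj, map_natCast]

lemma fac_conj (n : ℕ) (z : ℂ) :
    (starRingEnd ℂ) (fac t n ((starRingEnd ℂ) z)) = fac t n z := by
  have hr : (starRingEnd ℂ) ((t n : ℝ) : ℂ) = ((t n : ℝ) : ℂ) := Complex.conj_ofReal _
  unfold fac
  split
  · simp
  · rw [map_mul, map_sub, map_one, map_div₀, hr, Complex.conj_conj, ← Complex.exp_conj]
    congr 2
    rw [map_neg]
    congr 1
    simpa only [map_neg, map_div₀, hr] using conj_logTaylor (n + 1) (-(z / ((t n : ℝ) : ℂ)))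

lemma gf_conj (n : ℕ) (z : ℂ) (h0 : t n ≠ 0) (h : ‖z / ((t n : ℝ) : ℂ)‖ ≤ 1 / 2) :
    (starRingEnd ℂ) (gf t n ((starRingEnd ℂ) z)) = gf t n z := by
  have hr : (starRingEnd ℂ) ((t n : ℝ) : ℂ) = ((t n : ℝ) : ℂ) := Complex.conj_ofReal _
  have hre := re_pos t n z h
  have harg : ((1 : ℂ) - z / (t n : ℂ)).arg ≠ Real.pi := by
    intro hpi
    have := (Complex.arg_eq_pi_iff.mp hpi).1
    linarith
  unfold gf
  rw [map_sub]
  congr 1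
  · have h1 : (1 : ℂ) - (starRingEnd ℂ) z / ((t n : ℝ) : ℂ)
        = (starRingEnd ℂ) ((1 : ℂ) - z / (t n : ℂ)) := by
      rw [map_sub, map_one, map_div₀, hr]
    rw [h1, Complex.log_conj _ harg, Complex.conj_conj]
  · simpa only [map_neg, map_div₀, hr] using conj_logTaylor (n + 1) (-(z / ((t n : ℝ) : ℂ)))

lemma exists_N (hdisc : ∀ R : ℝ, {n : ℕ | |t n| ≤ R}.Finite) (R : ℝ) :
    ∃ N : ℕ, ∀ n ≥ N, 2 * R ≤ |t n| := by
  obtain ⟨N, hN⟩ := (hdisc (2 * R)).bddAbove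
  refine ⟨N + 1, fun n hn => ?_⟩
  by_contra hcon
  push_neg at hcon
  have h1 : n ∈ {n : ℕ | |t n| ≤ 2 * R} := le_of_lt hcon
  have := hN h1
  omega

lemma key (R : ℝ) (N : ℕ) (hN : ∀ n ≥ N, 2 * R ≤ |t n|) {z : ℂ} (hz : ‖z‖ < R) :
    ∀ n ≥ N, t n ≠ 0 ∧ ‖z / ((t n : ℝ) : ℂ)‖ ≤ 1 / 2 := by
  intro n hn
  have h2 := hN n hn
  have hR : 0 < R := lt_of_le_of_lt (norm_nonneg z) hz
  have h0 : t n ≠ 0 := by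
    intro h
    rw [h] at h2
    simp only [abs_zero] at h2
    linarith
  refine ⟨h0, ?_⟩
  rw [norm_div, Complex.norm_real, Real.norm_eq_abs, div_le_iff₀ (by positivity)]
  nlinarith [abs_nonneg (t n), norm_nonneg z]

lemma summable_gf (R : ℝ) (N : ℕ) (hN : ∀ n ≥ N, 2 * R ≤ |t n|) {z : ℂ} (hz : ‖z‖ < R) :
    Summable (fun n => gf t (n + N) z) := by
  refine Summable.of_norm_bounded (g := fun n => (1 / 2 : ℝ) ^ (n + N)) ?_ ?_
  · simp only [pow_add]
    exact (summable_geometric_of_lt_one (by norm_num) (by norm_num)).mul_right _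
  · intro n
    obtain ⟨h0, hw⟩ := key t R N hN hz (n + N) (Nat.le_add_left N n)
    exact norm_gf_le t (n + N) z h0 hw

lemma F_eq (R : ℝ) (N : ℕ) (hN : ∀ n ≥ N, 2 * R ≤ |t n|) {z : ℂ} (hz : ‖z‖ < R) :
    HasProd (fun n => fac t n z)
      ((∏ n ∈ Finset.range N, fac t n z) * Complex.exp (∑' n, gf t (n + N) z)) := by
  have hs := summable_gf t R N hN hz
  have hp : HasProd (fun n => fac t (n + N) z)
      (Complex.exp (∑' n, gf t (n + N) z)) := by
    have h1 := hasProd_cexp hs.hasSum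
    have h2 : (fun n => Complex.exp (gf t (n + N) z)) = fun n => fac t (n + N) z := by
      funext n
      obtain ⟨h0, hw⟩ := key t R N hN hz (n + N) (Nat.le_add_left N n)
      exact (fac_eq_exp t (n + N) z h0 (lt_of_le_of_lt hw (by norm_num))).symm
    rwa [h2] at h1
  exact hasProd_prefix N hp

lemma F_tprod_eq (R : ℝ) (N : ℕ) (hN : ∀ n ≥ N, 2 * R ≤ |t n|) {z : ℂ} (hz : ‖z‖ < R) :
    (∏' n, fac t n z)
      = (∏ n ∈ Finset.range N, fac t n z) * Complex.exp (∑' n, gf t (n + N) z) :=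
  (F_eq t R N hN hz).tprod_eq

lemma sigma_diff (R : ℝ) (N : ℕ) (hN : ∀ n ≥ N, 2 * R ≤ |t n|) :
    DifferentiableOn ℂ (fun z => ∑' n, gf t (n + N) z) (Metric.ball (0 : ℂ) R) := by
  have hu : Summable (fun n : ℕ => (1 / 2 : ℝ) ^ (n + N)) := by
    simp only [pow_add]
    exact (summable_geometric_of_lt_one (by norm_num) (by norm_num)).mul_right _
  have htu := tendstoUniformlyOn_tsum hu
    (f := fun n z => gf t (n + N) z) (s := Metric.ball (0 : ℂ) R) ?_
  · refine TendstoLocallyUniformlyOn.differentiableOn htu.tendstoLocallyUniformlyOn ?_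
      Metric.isOpen_ball
    filter_upwards with s z hz
    have hz' : ‖z‖ < R := by simpa [Metric.mem_ball, dist_zero_right] using hz
    refine DifferentiableAt.differentiableWithinAt ?_
    refine DifferentiableAt.fun_sum (fun n _ => ?_)
    obtain ⟨h0, hw⟩ := key t R N hN hz' (n + N) (Nat.le_add_left N n)
    exact gf_diff t (n + N) z h0 hw
  · intro n z hz
    have hz' : ‖z‖ < R := by simpa [Metric.mem_ball, dist_zero_right] using hz
    obtain ⟨h0, hw⟩ := key t R N hN hz' (n + N) (Nat.le_add_left N n)
    exact norm_gf_le t (n + N) z h0 hw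

theorem exists_F (ht : Function.Injective t)
    (hdisc : ∀ R : ℝ, {n : ℕ | |t n| ≤ R}.Finite) :
    ∃ F : ℂ → ℂ, Differentiable ℂ F ∧
      (∀ z : ℂ, F z = 0 ↔ ∃ n : ℕ, z = ((t n : ℝ) : ℂ)) ∧
      (∀ n : ℕ, deriv F ((t n : ℝ) : ℂ) ≠ 0) ∧
      (∀ z : ℂ, (starRingEnd ℂ) (F ((starRingEnd ℂ) z)) = F z) := by
  refine ⟨fun z => ∏' n, fac t n z, ?_, ?_, ?_, ?_⟩
  · -- Differentiable
    intro z₀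
    set R : ℝ := ‖z₀‖ + 1 with hR
    obtain ⟨N, hN⟩ := exists_N t hdisc R
    have hball : z₀ ∈ Metric.ball (0 : ℂ) R := by
      simp only [Metric.mem_ball, dist_zero_right]
      simp [hR]
    have hD : DifferentiableOn ℂ
        (fun z => (∏ n ∈ Finset.range N, fac t n z) * Complex.exp (∑' n, gf t (n + N) z))
        (Metric.ball (0 : ℂ) R) := by
      refine DifferentiableOn.mul ?_ (sigma_diff t R N hN).cexp
      exact DifferentiableOn.fun_finsetProd
        (fun n _ => (fac_differentiable t n).differentiableOn)
    have hcong : DifferentiableOn ℂ (fun z => ∏' n, fac t n z) (Metric.ball (0 : ℂ) R) := by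
      refine hD.congr (fun z hz => ?_)
      have hz' : ‖z‖ < R := by simpa [Metric.mem_ball, dist_zero_right] using hz
      exact F_tprod_eq t R N hN hz'
    exact (hcong.differentiableAt (Metric.isOpen_ball.mem_nhds hball))
  · -- zeros
    intro z
    set R : ℝ := ‖z‖ + 1 with hR
    obtain ⟨N, hN⟩ := exists_N t hdisc R
    have hz : ‖z‖ < R := by simp [hR]
    show (∏' n, fac t n z) = 0 ↔ _
    rw [F_tprod_eq t R N hN hz]
    rw [mul_eq_zero, or_iff_left (Complex.exp_ne_zero _)]
    constructor
    · intro h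
      obtain ⟨n, _, hn2⟩ := Finset.prod_eq_zero_iff.mp h
      exact ⟨n, (fac_eq_zero_iff t n z).mp hn2⟩
    · rintro ⟨m, rfl⟩
      have hm : m < N := by
        by_contra hm
        push_neg at hm
        have := hN m hm
        have hnz : ‖((t m : ℝ) : ℂ)‖ = |t m| := by
          rw [Complex.norm_real, Real.norm_eq_abs]
        rw [← hnz] at this
        have h0 : (0:ℝ) ≤ ‖((t m : ℝ) : ℂ)‖ := norm_nonneg _
        linarith
      exact Finset.prod_eq_zero (Finset.mem_range.mpr hm)
        ((fac_eq_zero_iff t m _).mpr rfl)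
  · -- simple zeros
    intro m
    set R : ℝ := |t m| + 1 with hR
    obtain ⟨N₀, hN₀⟩ := exists_N t hdisc R
    set N : ℕ := max N₀ (m + 1) with hNdef
    have hN : ∀ n ≥ N, 2 * R ≤ |t n| := fun n hn => hN₀ n (le_trans (le_max_left _ _) hn)
    have hmN : m < N := lt_of_lt_of_le (Nat.lt_succ_self m) (le_max_right _ _)
    have hball : ((t m : ℝ) : ℂ) ∈ Metric.ball (0 : ℂ) R := by
      simp only [Metric.mem_ball, dist_zero_right, Complex.norm_real, Real.norm_eq_abs]
      simp [hR]
    -- factor the m-th factor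
    obtain ⟨hm, hmdiff, hfach, hmne⟩ :
        ∃ h : ℂ → ℂ, Differentiable ℂ h ∧
          (∀ z, fac t m z = (z - ((t m : ℝ) : ℂ)) * h z) ∧ (∀ z, h z ≠ 0) := by
      unfold fac
      by_cases h0 : t m = 0
      · refine ⟨fun _ => 1, differentiable_const _, fun z => ?_, fun _ => one_ne_zero⟩
        rw [if_pos h0, h0]
        simp
      · have hc : ((t m : ℝ) : ℂ) ≠ 0 := by exact_mod_cast h0
        refine ⟨fun z => -(1 / ((t m : ℝ) : ℂ))
            * Complex.exp (-(logTaylor (m + 1) (-(z / ((t m : ℝ) : ℂ))))), ?_, fun z => ?_, fun z => ?_⟩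
        · exact Differentiable.mul (differentiable_const _)
            (Differentiable.cexp (logTaylor_comp_diff (m + 1) _).neg)
        · rw [if_neg h0]
          field_simp
          ring
        · exact mul_ne_zero (by simpa using hc) (Complex.exp_ne_zero _)
    set σ : ℂ → ℂ := fun z => ∑' n, gf t (n + N) z with hσdef
    set G : ℂ → ℂ := fun z =>
      hm z * (∏ n ∈ (Finset.range N).erase m, fac t n z) * Complex.exp (σ z) with hGdef
    have hGz : ∀ z ∈ Metric.ball (0 : ℂ) R, (∏' n, fac t n z) = (z - ((t m : ℝ) : ℂ)) * G z := by
      intro z hz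
      have hz' : ‖z‖ < R := by simpa [Metric.mem_ball, dist_zero_right] using hz
      rw [F_tprod_eq t R N hN hz',
        ← Finset.mul_prod_erase (Finset.range N) _ (Finset.mem_range.mpr hmN), hfach z, hGdef]
      ring
    have hGdiff : DifferentiableAt ℂ G ((t m : ℝ) : ℂ) := by
      have hσd : DifferentiableAt ℂ σ ((t m : ℝ) : ℂ) :=
        (sigma_diff t R N hN).differentiableAt (Metric.isOpen_ball.mem_nhds hball)
      exact ((hmdiff _).mul
        (DifferentiableAt.fun_finsetProd (fun n _ => fac_differentiable t n _))).mul hσd.cexp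
    have hev : (fun z => ∏' n, fac t n z) =ᶠ[nhds ((t m : ℝ) : ℂ)]
        fun z => (z - ((t m : ℝ) : ℂ)) * G z := by
      filter_upwards [Metric.isOpen_ball.mem_nhds hball] with z hz using hGz z hz
    have hder : deriv (fun z => ∏' n, fac t n z) ((t m : ℝ) : ℂ) = G ((t m : ℝ) : ℂ) := by
      rw [hev.deriv_eq]
      have hd : HasDerivAt (fun z => (z - ((t m : ℝ) : ℂ)) * G z)
          (1 * G ((t m : ℝ) : ℂ)
            + (((t m : ℝ) : ℂ) - ((t m : ℝ) : ℂ)) * deriv G ((t m : ℝ) : ℂ))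
          ((t m : ℝ) : ℂ) :=
        ((hasDerivAt_id _).sub_const _).mul hGdiff.hasDerivAt
      rw [hd.deriv]
      ring
    rw [hder, hGdef]
    refine mul_ne_zero (mul_ne_zero (hmne _) ?_) (Complex.exp_ne_zero _)
    rw [Finset.prod_ne_zero_iff]
    intro n hn
    rw [Ne, fac_eq_zero_iff t n]
    intro hzeq
    have : t m = t n := by exact_mod_cast hzeq
    exact (Finset.ne_of_mem_erase hn) (ht this).symm
  · -- symmetry
    intro z
    set R : ℝ := ‖z‖ + 1 with hR
    obtain ⟨N, hN⟩ := exists_N t hdisc R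
    have hz : ‖z‖ < R := by simp [hR]
    have hz' : ‖(starRingEnd ℂ) z‖ < R := by
      rw [RCLike.norm_conj]; exact hz
    show (starRingEnd ℂ) (∏' n, fac t n ((starRingEnd ℂ) z)) = ∏' n, fac t n z
    rw [F_tprod_eq t R N hN hz', F_tprod_eq t R N hN hz, map_mul]
    congr 1
    · rw [map_prod]
      exact Finset.prod_congr rfl fun n _ => fac_conj t n z
    · rw [← Complex.exp_conj]
      congr 1
      have hs' := summable_gf t R N hN hz'
      have hmap := hs'.hasSum.map (starRingEnd ℂ) continuous_conj
      have heq : (fun n => (starRingEnd ℂ) (gf t (n + N) ((starRingEnd ℂ) z)))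
          = fun n => gf t (n + N) z := by
        funext n
        obtain ⟨h0, hw⟩ := key t R N hN hz (n + N) (Nat.le_add_left N n)
        exact gf_conj t (n + N) z h0 hw
      have hmap2 : HasSum (fun n => gf t (n + N) z)
          ((starRingEnd ℂ) (∑' (b : ℕ), gf t (b + N) ((starRingEnd ℂ) z))) := by
        rw [← heq]
        exact hmap
      exact hmap2.tsum_eq.symm

theorem exists_growth (hdisc : ∀ R : ℝ, {n : ℕ | |t n| ≤ R}.Finite) (c : ℕ → ℝ) :
    ∃ φ : ℂ → ℂ, ∃ ψ : ℝ → ℝ, Differentiable ℂ φ ∧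
      (∀ z : ℂ, (starRingEnd ℂ) (φ ((starRingEnd ℂ) z)) = φ z) ∧
      (∀ x : ℝ, φ (x : ℂ) = ((ψ x : ℝ) : ℂ)) ∧
      (∀ n : ℕ, c n ≤ ψ (t n)) := by
  classical
  set d : ℕ → ℝ := fun j =>
    (insert (0 : ℝ) (((hdisc (j : ℝ)).toFinset).image c)).max' (Finset.insert_nonempty _ _)
    with hd
  have hd0 : ∀ j, 0 ≤ d j := fun j => Finset.le_max' _ 0 (Finset.mem_insert_self _ _)
  have hcd : ∀ n (j : ℕ), |t n| ≤ (j : ℝ) → c n ≤ d j := by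
    intro n j h
    exact Finset.le_max' _ _ (Finset.mem_insert_of_mem
      (Finset.mem_image_of_mem c ((hdisc (j : ℝ)).mem_toFinset.mpr h)))
  have hdmono : ∀ j k : ℕ, j ≤ k → d j ≤ d k := by
    intro j k hjk
    apply Finset.max'_subset
    apply Finset.insert_subset_insert
    apply Finset.image_subset_image
    rw [Set.Finite.toFinset_subset_toFinset]
    intro n hn
    simp only [Set.mem_setOf_eq] at hn ⊢
    exact le_trans hn (by exact_mod_cast hjk)
  set m : ℕ → ℕ := fun k => 2 * (k + 1 + Nat.clog 2 ⌈d (k + 2)⌉₊) with hmdef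
  have hm_even : ∀ k, Even (m k) := fun k => even_two_mul _
  have hm_ge : ∀ k, k + 1 ≤ m k := by intro k; simp only [hmdef]; omega
  have hm_pow : ∀ k, d (k + 2) ≤ (2 : ℝ) ^ (m k) := by
    intro k
    have h1 : ⌈d (k + 2)⌉₊ ≤ 2 ^ Nat.clog 2 ⌈d (k + 2)⌉₊ := Nat.le_pow_clog one_lt_two _
    have h2 : Nat.clog 2 ⌈d (k + 2)⌉₊ ≤ m k := by simp only [hmdef]; omega
    calc d (k + 2) ≤ (⌈d (k + 2)⌉₊ : ℝ) := Nat.le_ceil _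
      _ ≤ ((2 ^ Nat.clog 2 ⌈d (k + 2)⌉₊ : ℕ) : ℝ) := by exact_mod_cast h1
      _ ≤ (2 : ℝ) ^ (m k) := by
          push_cast
          exact pow_le_pow_right₀ one_le_two h2
  set Φ : ℕ → ℂ → ℂ := fun k z => (2 * z / ((k : ℂ) + 1)) ^ (m k) with hΦ
  set q : ℕ → ℝ → ℝ := fun k x => (2 * x / ((k : ℝ) + 1)) ^ (m k) with hq
  set u : ℝ → ℕ → ℝ := fun R k => (2 * R / ((k : ℝ) + 1)) ^ (m k) with hu
  have hnormΦ : ∀ (k : ℕ) (z : ℂ), ‖Φ k z‖ = (2 * ‖z‖ / ((k : ℝ) + 1)) ^ (m k) := by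
    intro k z
    have hk : ((k : ℂ) + 1) = ((k + 1 : ℕ) : ℂ) := by push_cast; ring
    rw [hΦ]
    simp only [norm_pow, norm_div, norm_mul, hk, Complex.norm_natCast]
    norm_num
  have hΦu : ∀ (R : ℝ) (k : ℕ) (z : ℂ), ‖z‖ ≤ R → ‖Φ k z‖ ≤ u R k := by
    intro R k z hz
    rw [hnormΦ]
    apply pow_le_pow_left₀ (by positivity)
    apply div_le_div_of_nonneg_right ?_ (by positivity)
    linarith
  have hu_sum : ∀ R : ℝ, 0 < R → Summable (u R) := by
    intro R hR
    set K : ℕ := ⌈4 * R⌉₊ with hK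
    rw [← summable_nat_add_iff K]
    have hgeo : Summable (fun n : ℕ => (1 / 2 : ℝ) ^ (n + K)) := by
      simp only [pow_add]
      exact ((summable_geometric_of_lt_one (by norm_num) (by norm_num)).mul_right _)
    refine Summable.of_nonneg_of_le (fun n => by positivity) (fun n => ?_) hgeo
    · -- u R (n + K) ≤ (1/2)^(n+K)
      have hK4 : 4 * R ≤ (K : ℝ) := Nat.le_ceil _
      have h1 : 2 * R / (((n + K : ℕ) : ℝ) + 1) ≤ 1 / 2 := by
        rw [div_le_div_iff₀ (by positivity) (by norm_num)]
        push_cast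
        have : (0 : ℝ) ≤ (n : ℝ) := Nat.cast_nonneg n
        linarith
      calc u R (n + K) ≤ (1 / 2 : ℝ) ^ (m (n + K)) := by
            rw [hu]
            exact pow_le_pow_left₀ (by positivity) h1 _
        _ ≤ (1 / 2 : ℝ) ^ (n + K) := by
            apply pow_le_pow_of_le_one (by norm_num) (by norm_num)
            exact le_trans (Nat.le_succ _) (hm_ge _)
  have hsumΦ : ∀ z : ℂ, Summable (fun k => Φ k z) := by
    intro z
    exact Summable.of_norm_bounded (g := u (‖z‖ + 1))
      (hu_sum _ (by positivity)) (fun k => hΦu _ k z (by linarith [norm_nonneg z]))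
  have hqΦ : ∀ (k : ℕ) (x : ℝ), ‖q k x‖ = ‖Φ k ((x : ℝ) : ℂ)‖ := by
    intro k x
    rw [hnormΦ, hq, Real.norm_eq_abs, _root_.abs_pow, Complex.norm_real, Real.norm_eq_abs]
    congr 1
    rw [_root_.abs_div, _root_.abs_mul, _root_.abs_two, _root_.abs_of_nonneg (show (0 : ℝ) ≤ (k : ℝ) + 1 by positivity)]
  have hsumq : ∀ x : ℝ, Summable (fun k => q k x) := by
    intro x
    refine Summable.of_norm_bounded (g := u (|x| + 1)) (hu_sum _ (by positivity)) (fun k => ?_)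
    rw [hqΦ]
    refine hΦu _ k _ ?_
    rw [Complex.norm_real, Real.norm_eq_abs]
    linarith
  refine ⟨fun z => ((d 2 : ℝ) : ℂ) + ∑' k, Φ k z, fun x => d 2 + ∑' k, q k x, ?_, ?_, ?_, ?_⟩
  · -- differentiable
    intro z₀
    set R := ‖z₀‖ + 1 with hR
    have hball : z₀ ∈ Metric.ball (0 : ℂ) R := by
      simp only [Metric.mem_ball, dist_zero_right, hR]
      linarith
    have hDon : DifferentiableOn ℂ (fun z => ∑' k, Φ k z) (Metric.ball (0 : ℂ) R) := by
      have htu := tendstoUniformlyOn_tsum (hu_sum R (by positivity))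
        (f := fun k z => Φ k z) (s := Metric.ball (0 : ℂ) R) ?_
      · refine TendstoLocallyUniformlyOn.differentiableOn htu.tendstoLocallyUniformlyOn ?_
          Metric.isOpen_ball
        filter_upwards with s z hz
        refine DifferentiableAt.differentiableWithinAt (DifferentiableAt.fun_sum (fun k _ => ?_))
        exact (((differentiable_id.const_mul (2 : ℂ)).div_const _).pow _) z
      · intro k z hz
        have hz' : ‖z‖ < R := by simpa [Metric.mem_ball, dist_zero_right] using hz
        exact hΦu R k z hz'.le
    exact ((differentiableOn_const _).add hDon).differentiableAt
      (Metric.isOpen_ball.mem_nhds hball)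
  · -- conjugation symmetry
    intro z
    show (starRingEnd ℂ) (((d 2 : ℝ) : ℂ) + ∑' k, Φ k ((starRingEnd ℂ) z))
      = ((d 2 : ℝ) : ℂ) + ∑' k, Φ k z
    have hmap := (hsumΦ ((starRingEnd ℂ) z)).hasSum.map (starRingEnd ℂ) continuous_conj
    have heq : (fun k => (starRingEnd ℂ) (Φ k ((starRingEnd ℂ) z))) = fun k => Φ k z := by
      funext k
      rw [hΦ]
      simp only [map_pow, map_div₀, map_mul, map_add, Complex.conj_conj, map_natCast, map_one, map_ofNat]
    rw [map_add, Complex.conj_ofReal]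
    congr 1
    have hmap2 : HasSum (fun k => Φ k z)
        ((starRingEnd ℂ) (∑' k, Φ k ((starRingEnd ℂ) z))) := by
      rw [← heq]; exact hmap
    exact hmap2.tsum_eq.symm
  · -- real values on the real axis
    intro x
    show ((d 2 : ℝ) : ℂ) + ∑' k, Φ k ((x : ℝ) : ℂ) = _
    have hmap := (hsumq x).hasSum.map Complex.ofRealHom Complex.continuous_ofReal
    have heq : (fun k => Complex.ofRealHom (q k x)) = fun k => Φ k ((x : ℝ) : ℂ) := by
      funext k
      simp only [Complex.ofRealHom_eq_coe]
      rw [hq, hΦ]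
      push_cast
      ring
    have hmap2 : HasSum (fun k => Φ k ((x : ℝ) : ℂ))
        (Complex.ofRealHom (∑' k, q k x)) := by
      rw [← heq]; exact hmap
    rw [hmap2.tsum_eq, Complex.ofReal_add]
    rfl
  · -- lower bound at the points t n
    intro n
    set x := t n with hx
    set j : ℕ := ⌈|x|⌉₊ with hj
    have hcnd : c n ≤ d j := hcd n j (Nat.le_ceil _)
    have hq_nonneg : ∀ k, 0 ≤ q k x := fun k => (hm_even k).pow_nonneg _
    have htsum_nonneg : 0 ≤ ∑' k, q k x := tsum_nonneg hq_nonneg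
    show c n ≤ d 2 + ∑' k, q k x
    rcases le_or_gt j 2 with hj2 | hj2
    · have := hdmono j 2 hj2
      linarith
    · set k := j - 2 with hk
      have hkj : k + 2 = j := by omega
      have hxlb : ((k + 1 : ℕ) : ℝ) < |x| := by
        refine Nat.lt_ceil.mp ?_
        omega
      have hq_ge : (2 : ℝ) ^ (m k) ≤ q k x := by
        have habs : (2 : ℝ) ≤ |2 * x / ((k : ℝ) + 1)| := by
          rw [_root_.abs_div, _root_.abs_mul, _root_.abs_two,
            _root_.abs_of_nonneg (show (0 : ℝ) ≤ (k : ℝ) + 1 by positivity),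
            le_div_iff₀ (by positivity)]
          push_cast at hxlb
          linarith
        calc (2 : ℝ) ^ (m k) ≤ |2 * x / ((k : ℝ) + 1)| ^ (m k) :=
              pow_le_pow_left₀ (by norm_num) habs _
          _ = q k x := by rw [hq]; exact (hm_even k).pow_abs _
      have h5 : d j ≤ ∑' i, q i x := by
        calc d j = d (k + 2) := by rw [hkj]
          _ ≤ (2 : ℝ) ^ (m k) := hm_pow k
          _ ≤ q k x := hq_ge
          _ ≤ ∑' i, q i x := Summable.le_tsum (hsumq x) k (fun i _ => hq_nonneg i)
      linarith [hd0 2]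
end WAux

/-- **Lemma.** Given a sequence `{tₙ}` of distinct real numbers whose range is an
infinite discrete subset of `ℝ`, and positive weights `μₙ > 0`, there exists an
entire function `S` whose zero set is exactly `{tₙ}`, all of whose zeros are
simple, which is real-symmetric (`S* = S`), and such that
`∑ₙ 1/(|S'(tₙ)|² μₙ) < ∞`. -/
theorem exists_entire_with_summable_reciprocal_derivatives
    (t : ℕ → ℝ) (ht : Function.Injective t)
    (hdisc : ∀ R : ℝ, {n : ℕ | |t n| ≤ R}.Finite)
    (μ : ℕ → ℝ) (hμ : ∀ n, 0 < μ n) :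
    ∃ S : ℂ → ℂ,
      Differentiable ℂ S ∧
      (∀ z : ℂ, S z = 0 ↔ ∃ n : ℕ, z = (t n : ℂ)) ∧
      (∀ n : ℕ, deriv S (t n) ≠ 0) ∧
      (∀ z : ℂ, (starRingEnd ℂ) (S ((starRingEnd ℂ) z)) = S z) ∧
      Summable (fun n => 1 / (‖deriv S (t n)‖ ^ 2 * μ n)) := by
  obtain ⟨F, hFdiff, hFzero, hFderiv, hFconj⟩ := WAux.exists_F t ht hdisc
  set c : ℕ → ℝ := fun n =>
    ((n : ℝ) * Real.log 2 - Real.log (‖deriv F ((t n : ℝ) : ℂ)‖ ^ 2 * μ n)) / 2 with hc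
  obtain ⟨φ, ψ, hφdiff, hφconj, hφreal, hψge⟩ := WAux.exists_growth t hdisc c
  have hSderiv : ∀ n : ℕ, deriv (fun z => Complex.exp (φ z) * F z) ((t n : ℝ) : ℂ)
      = Complex.exp (φ ((t n : ℝ) : ℂ)) * deriv F ((t n : ℝ) : ℂ) := by
    intro n
    have hd := (((hφdiff ((t n : ℝ) : ℂ)).cexp).hasDerivAt.fun_mul (hFdiff ((t n : ℝ) : ℂ)).hasDerivAt)
    rw [hd.deriv]
    have hF0 : F ((t n : ℝ) : ℂ) = 0 := (hFzero _).mpr ⟨n, rfl⟩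
    rw [hF0]
    ring
  have hnormS : ∀ n : ℕ, ‖deriv (fun z => Complex.exp (φ z) * F z) ((t n : ℝ) : ℂ)‖
      = Real.exp (ψ (t n)) * ‖deriv F ((t n : ℝ) : ℂ)‖ := by
    intro n
    rw [hSderiv n, norm_mul]
    congr 1
    rw [hφreal, Complex.norm_exp, Complex.ofReal_re]
  refine ⟨fun z => Complex.exp (φ z) * F z, ?_, ?_, ?_, ?_, ?_⟩
  · exact (hφdiff.cexp).mul hFdiff
  · intro z
    show Complex.exp (φ z) * F z = 0 ↔ _
    rw [mul_eq_zero, or_iff_right (Complex.exp_ne_zero _)]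
    exact hFzero z
  · intro n
    rw [hSderiv n]
    exact mul_ne_zero (Complex.exp_ne_zero _) (hFderiv n)
  · intro z
    show (starRingEnd ℂ) (Complex.exp (φ ((starRingEnd ℂ) z)) * F ((starRingEnd ℂ) z)) = _
    rw [map_mul, ← Complex.exp_conj, hφconj, hFconj]
  · have hkey : ∀ n : ℕ,
        1 / (‖deriv (fun z => Complex.exp (φ z) * F z) ((t n : ℝ) : ℂ)‖ ^ 2 * μ n)
          ≤ (1 / 2 : ℝ) ^ n := by
      intro n
      set A : ℝ := ‖deriv F ((t n : ℝ) : ℂ)‖ ^ 2 * μ n with hA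
      have hApos : 0 < A := by
        have h1 : 0 < ‖deriv F ((t n : ℝ) : ℂ)‖ := norm_pos_iff.mpr (hFderiv n)
        rw [hA]
        exact mul_pos (pow_pos h1 2) (hμ n)
      have hc2 : Real.exp (c n) ^ 2 * A = 2 ^ n := by
        have he1 : Real.exp (c n) ^ 2 = Real.exp (2 * c n) := by
          rw [show (2 : ℝ) * c n = ((2 : ℕ) : ℝ) * c n by norm_num, Real.exp_nat_mul]
        have he2 : 2 * c n = (n : ℝ) * Real.log 2 - Real.log A := by
          rw [hc, hA]
          ring
        rw [he1, he2, Real.exp_sub, Real.exp_log hApos,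
          show (n : ℝ) * Real.log 2 = ((n : ℕ) : ℝ) * Real.log 2 by norm_num,
          Real.exp_nat_mul, Real.exp_log (by norm_num : (0:ℝ) < 2)]
        field_simp
      have hexp_ge : Real.exp (c n) ≤ Real.exp (ψ (t n)) := Real.exp_le_exp.mpr (hψge n)
      have hSnorm2 : ‖deriv (fun z => Complex.exp (φ z) * F z) ((t n : ℝ) : ℂ)‖ ^ 2 * μ n
          = Real.exp (ψ (t n)) ^ 2 * A := by
        rw [hnormS n, hA]
        ring
      have h2n : (2 : ℝ) ^ n ≤ Real.exp (ψ (t n)) ^ 2 * A := by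
        rw [← hc2]
        exact mul_le_mul_of_nonneg_right
          (pow_le_pow_left₀ (Real.exp_nonneg _) hexp_ge 2) hApos.le
      rw [hSnorm2]
      calc 1 / (Real.exp (ψ (t n)) ^ 2 * A)
          ≤ 1 / (2 : ℝ) ^ n := one_div_le_one_div_of_le (by positivity) h2n
        _ = (1 / 2 : ℝ) ^ n := by rw [one_div_pow]
    refine Summable.of_nonneg_of_le
      (fun n => div_nonneg zero_le_one
        (mul_nonneg (pow_nonneg (norm_nonneg _) 2) (hμ n).le))
      hkey (summable_geometric_of_lt_one (by norm_num) (by norm_num))
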